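/- Let Omega_R = B_R \ closure(B_1) be the planar annulus with outer radius R > 1 and inner radius 1. The Taylor-Couette velocity field v0(xi) = (rho - 1/rho) * theta-hat, where (rho, theta) are polar coordinates and theta-hat = (-sin theta, cos theta), is a harmonic, divergence-free vector field on Omega_R that vanishes on the inner circle partial B_1 but is not identically zero in Omega_R. -/

import Mathlib

open Set

/-- Second directional derivative of `f` in direction `v` (applied twice). -/
noncomputable def d2 (f : ℝ × ℝ → ℝ) (v : ℝ × ℝ) (p : ℝ × ℝ) : ℝ :=
  fderiv ℝ (fun q => fderiv ℝ f q v) p v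

/-- First component of the Taylor–Couette field `v0(x,y) = (1 - 1/(x²+y²)) (-y, x)`. -/
noncomputable def tc1 (p : ℝ × ℝ) : ℝ := (1 - 1 / (p.1 ^ 2 + p.2 ^ 2)) * (-p.2)

/-- Second component of the Taylor–Couette field. -/
noncomputable def tc2 (p : ℝ × ℝ) : ℝ := (1 - 1 / (p.1 ^ 2 + p.2 ^ 2)) * p.1

lemma hasFDerivAt_N (p : ℝ × ℝ) :
    HasFDerivAt (fun q : ℝ × ℝ => q.1 ^ 2 + q.2 ^ 2)
      ((2 * p.1) • ContinuousLinearMap.fst ℝ ℝ ℝ + (2 * p.2) • ContinuousLinearMap.snd ℝ ℝ ℝ) p := by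
  have h1 := (hasFDerivAt_fst (p := p) (𝕜 := ℝ)).mul (hasFDerivAt_fst (p := p) (𝕜 := ℝ))
  have h2 := (hasFDerivAt_snd (p := p) (𝕜 := ℝ)).mul (hasFDerivAt_snd (p := p) (𝕜 := ℝ))
  have := h1.add h2
  simp only [pow_two, two_mul, add_smul] at *
  exact this

lemma hasFDerivAt_Ninv (p : ℝ × ℝ) (h : p.1 ^ 2 + p.2 ^ 2 ≠ 0) :
    HasFDerivAt (fun q : ℝ × ℝ => (q.1 ^ 2 + q.2 ^ 2)⁻¹)
      ((-(((p.1 ^ 2 + p.2 ^ 2)) ^ 2)⁻¹) •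
        ((2 * p.1) • ContinuousLinearMap.fst ℝ ℝ ℝ + (2 * p.2) • ContinuousLinearMap.snd ℝ ℝ ℝ)) p :=
  (hasDerivAt_inv h).comp_hasFDerivAt p (hasFDerivAt_N p)

lemma fderiv_tc1 (p : ℝ × ℝ) (h : p.1 ^ 2 + p.2 ^ 2 ≠ 0) (v : ℝ × ℝ) :
    fderiv ℝ tc1 p v =
      (2 * p.1 * v.1 + 2 * p.2 * v.2) / (p.1 ^ 2 + p.2 ^ 2) ^ 2 * (-p.2)
        - (1 - 1 / (p.1 ^ 2 + p.2 ^ 2)) * v.2 := by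
  have hf := (hasFDerivAt_const (1 : ℝ) p).sub (hasFDerivAt_Ninv p h)
  have hg := (hasFDerivAt_snd (p := p) (𝕜 := ℝ)).neg
  have htc := hf.mul hg
  have heq : tc1 = fun q : ℝ × ℝ => (1 - (q.1 ^ 2 + q.2 ^ 2)⁻¹) * (-q.2) := by
    funext q; simp [tc1, one_div]
  rw [heq, HasFDerivAt.fderiv (f := fun q : ℝ × ℝ => (1 - (q.1 ^ 2 + q.2 ^ 2)⁻¹) * (-q.2)) htc]
  simp only [ContinuousLinearMap.add_apply, ContinuousLinearMap.smul_apply,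
    ContinuousLinearMap.coe_fst', ContinuousLinearMap.coe_snd', ContinuousLinearMap.sub_apply,
    ContinuousLinearMap.zero_apply, ContinuousLinearMap.neg_apply, ContinuousLinearMap.coe_smul',
    Pi.smul_apply, smul_eq_mul, Pi.sub_apply, Pi.neg_apply]
  field_simp
  ring

lemma fderiv_tc2 (p : ℝ × ℝ) (h : p.1 ^ 2 + p.2 ^ 2 ≠ 0) (v : ℝ × ℝ) :
    fderiv ℝ tc2 p v =
      (2 * p.1 * v.1 + 2 * p.2 * v.2) / (p.1 ^ 2 + p.2 ^ 2) ^ 2 * p.1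
        + (1 - 1 / (p.1 ^ 2 + p.2 ^ 2)) * v.1 := by
  have hf := (hasFDerivAt_const (1 : ℝ) p).sub (hasFDerivAt_Ninv p h)
  have hg := hasFDerivAt_fst (p := p) (𝕜 := ℝ)
  have htc := hf.mul hg
  have heq : tc2 = fun q : ℝ × ℝ => (1 - (q.1 ^ 2 + q.2 ^ 2)⁻¹) * q.1 := by
    funext q; simp [tc2, one_div]
  rw [heq, HasFDerivAt.fderiv (f := fun q : ℝ × ℝ => (1 - (q.1 ^ 2 + q.2 ^ 2)⁻¹) * q.1) htc]
  simp only [ContinuousLinearMap.add_apply, ContinuousLinearMap.smul_apply,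
    ContinuousLinearMap.coe_fst', ContinuousLinearMap.coe_snd', ContinuousLinearMap.sub_apply,
    ContinuousLinearMap.zero_apply, ContinuousLinearMap.neg_apply, ContinuousLinearMap.coe_smul',
    Pi.smul_apply, smul_eq_mul, Pi.sub_apply, Pi.neg_apply]
  field_simp
  ring

/-- Generic form of the first-order partial derivatives of the Taylor–Couette field. -/
noncomputable def G (α β γ c δ : ℝ) (q : ℝ × ℝ) : ℝ :=
  (α * (q.1 * q.2) + β * (q.1 * q.1) + γ * (q.2 * q.2))
    * ((q.1 ^ 2 + q.2 ^ 2)⁻¹ * (q.1 ^ 2 + q.2 ^ 2)⁻¹) + c + δ * (q.1 ^ 2 + q.2 ^ 2)⁻¹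

lemma fderiv_G (α β γ c δ : ℝ) (p : ℝ × ℝ) (h : p.1 ^ 2 + p.2 ^ 2 ≠ 0) (v : ℝ × ℝ) :
    fderiv ℝ (G α β γ c δ) p v =
      (α * (v.1 * p.2 + p.1 * v.2) + 2 * β * p.1 * v.1 + 2 * γ * p.2 * v.2)
          / (p.1 ^ 2 + p.2 ^ 2) ^ 2
        - 2 * (α * (p.1 * p.2) + β * (p.1 * p.1) + γ * (p.2 * p.2))
            * (2 * p.1 * v.1 + 2 * p.2 * v.2) / (p.1 ^ 2 + p.2 ^ 2) ^ 3
        - δ * (2 * p.1 * v.1 + 2 * p.2 * v.2) / (p.1 ^ 2 + p.2 ^ 2) ^ 2 := by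
  have hx := hasFDerivAt_fst (p := p) (𝕜 := ℝ)
  have hy := hasFDerivAt_snd (p := p) (𝕜 := ℝ)
  have hP := (((hx.mul hy).const_mul α).add ((hx.mul hx).const_mul β)).add
    ((hy.mul hy).const_mul γ)
  have hI := hasFDerivAt_Ninv p h
  have hG := ((hP.mul (hI.mul hI)).add_const c).add (hI.const_mul δ)
  rw [show G α β γ c δ = fun q : ℝ × ℝ =>
      ((α * (q.1 * q.2) + β * (q.1 * q.1) + γ * (q.2 * q.2))
        * ((q.1 ^ 2 + q.2 ^ 2)⁻¹ * (q.1 ^ 2 + q.2 ^ 2)⁻¹) + c) + δ * (q.1 ^ 2 + q.2 ^ 2)⁻¹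
    from rfl, HasFDerivAt.fderiv (f := fun q : ℝ × ℝ =>
      ((α * (q.1 * q.2) + β * (q.1 * q.1) + γ * (q.2 * q.2))
        * ((q.1 ^ 2 + q.2 ^ 2)⁻¹ * (q.1 ^ 2 + q.2 ^ 2)⁻¹) + c) + δ * (q.1 ^ 2 + q.2 ^ 2)⁻¹) hG]
  simp only [ContinuousLinearMap.add_apply, ContinuousLinearMap.smul_apply,
    ContinuousLinearMap.coe_fst', ContinuousLinearMap.coe_snd',
    ContinuousLinearMap.neg_apply, smul_eq_mul, Pi.mul_apply, Pi.add_apply]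
  field_simp
  ring

lemma nhds_ne (p : ℝ × ℝ) (h : p.1 ^ 2 + p.2 ^ 2 ≠ 0) :
    {q : ℝ × ℝ | q.1 ^ 2 + q.2 ^ 2 ≠ 0} ∈ nhds p := by
  have hc : Continuous fun q : ℝ × ℝ => q.1 ^ 2 + q.2 ^ 2 := by fun_prop
  exact (isOpen_compl_singleton.preimage hc).mem_nhds h

lemma d2_eq (f : ℝ × ℝ → ℝ) (α β γ c δ : ℝ) (v : ℝ × ℝ) (p : ℝ × ℝ)
    (h : p.1 ^ 2 + p.2 ^ 2 ≠ 0)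
    (hfg : ∀ q : ℝ × ℝ, q.1 ^ 2 + q.2 ^ 2 ≠ 0 → fderiv ℝ f q v = G α β γ c δ q) :
    d2 f v p = fderiv ℝ (G α β γ c δ) p v := by
  unfold d2
  congr 1
  exact Filter.EventuallyEq.fderiv_eq
    (Filter.eventuallyEq_of_mem (nhds_ne p h) fun q hq => hfg q hq)

/-- On the annulus `Ω_R = B_R \ closure B_1` (outer radius `R > 1`), the Taylor–Couette
velocity field is harmonic and divergence-free, vanishes on the inner circle `∂B_1`,
but is not identically zero in `Ω_R`. -/
theorem stmt_6 (R : ℝ) (hR : 1 < R) :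
    (∀ p ∈ {p : ℝ × ℝ | 1 < p.1 ^ 2 + p.2 ^ 2 ∧ p.1 ^ 2 + p.2 ^ 2 < R ^ 2},
      d2 tc1 (1, 0) p + d2 tc1 (0, 1) p = 0 ∧
      d2 tc2 (1, 0) p + d2 tc2 (0, 1) p = 0 ∧
      fderiv ℝ tc1 p (1, 0) + fderiv ℝ tc2 p (0, 1) = 0) ∧
    (∀ p : ℝ × ℝ, p.1 ^ 2 + p.2 ^ 2 = 1 → tc1 p = 0 ∧ tc2 p = 0) ∧
    (∃ p ∈ {p : ℝ × ℝ | 1 < p.1 ^ 2 + p.2 ^ 2 ∧ p.1 ^ 2 + p.2 ^ 2 < R ^ 2},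
      tc1 p ≠ 0 ∨ tc2 p ≠ 0) := by
  refine ⟨fun p hp => ?_, fun p hp => ?_, ?_⟩
  · obtain ⟨hp1, hp2⟩ := hp
    have h : p.1 ^ 2 + p.2 ^ 2 ≠ 0 := by positivity
    refine ⟨?_, ?_, ?_⟩
    · rw [d2_eq tc1 (-2) 0 0 0 0 (1, 0) p h fun q hq => by
          rw [fderiv_tc1 q hq]; unfold G; field_simp; ring,
        d2_eq tc1 0 0 (-2) (-1) 1 (0, 1) p h fun q hq => by
          rw [fderiv_tc1 q hq]; unfold G; field_simp; ring,
        fderiv_G _ _ _ _ _ p h, fderiv_G _ _ _ _ _ p h]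
      field_simp
      ring
    · rw [d2_eq tc2 0 2 0 1 (-1) (1, 0) p h fun q hq => by
          rw [fderiv_tc2 q hq]; unfold G; field_simp; ring,
        d2_eq tc2 2 0 0 0 0 (0, 1) p h fun q hq => by
          rw [fderiv_tc2 q hq]; unfold G; field_simp; ring,
        fderiv_G _ _ _ _ _ p h, fderiv_G _ _ _ _ _ p h]
      field_simp
      ring
    · rw [fderiv_tc1 p h, fderiv_tc2 p h]
      field_simp
      ring
  · constructor <;> simp [tc1, tc2, hp]
  · refine ⟨((1 + R) / 2, 0), ⟨?_, ?_⟩, Or.inr ?_⟩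
    · simp only
      nlinarith
    · simp only
      nlinarith
    · have h1 : (1 : ℝ) < ((1 + R) / 2) ^ 2 + (0 : ℝ) ^ 2 := by nlinarith
      simp only [tc2]
      have h2 : (0 : ℝ) < 1 - 1 / (((1 + R) / 2) ^ 2 + (0 : ℝ) ^ 2) := by
        have : 1 / (((1 + R) / 2) ^ 2 + (0 : ℝ) ^ 2) < 1 := by
          rw [div_lt_one (by nlinarith)]; nlinarith
        linarith
      positivity
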